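/- Let θ be an irrational real number. Then there exist strictly increasing sequences of positive integers (k_n) and (l_n) with each k_n odd, such that for all j < n: |e^{2πi θ k_j l_n} + 1| < 2^{-n} and |e^{2πi θ k_n l_j} − 1| < 2^{-n}. -/

import Mathlib

open Complex


-- density of ℤ + ℤα
lemma dense_aux (α : ℝ) (hα : Irrational α) :
    Dense ((AddSubgroup.closure ({1, α} : Set ℝ) : AddSubgroup ℝ) : Set ℝ) := by
  rcases AddSubgroup.dense_or_cyclic (AddSubgroup.closure ({1, α} : Set ℝ)) with h | ⟨a, ha⟩
  · exact h
  · exfalso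
    have h1 : (1:ℝ) ∈ AddSubgroup.closure ({1, α} : Set ℝ) :=
      AddSubgroup.subset_closure (by simp)
    have h2 : α ∈ AddSubgroup.closure ({1, α} : Set ℝ) :=
      AddSubgroup.subset_closure (by simp)
    rw [ha, AddSubgroup.mem_closure_singleton] at h1 h2
    obtain ⟨m, hm⟩ := h1
    obtain ⟨n, hn⟩ := h2
    rw [zsmul_eq_mul] at hm hn
    have hm0 : (m:ℝ) ≠ 0 := by
      rintro h
      rw [h, zero_mul] at hm
      exact one_ne_zero hm.symm
    refine hα ⟨(n : ℚ) / (m : ℚ), ?_⟩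
    push_cast
    rw [div_eq_iff hm0, ← hn]
    have : a = 1 / m := by field_simp at hm ⊢; linarith [hm]
    rw [this]; field_simp



-- small positive combinations
lemma small_aux (α : ℝ) (hα : Irrational α) {ε : ℝ} (hε : 0 < ε) :
    ∃ (n₀ : ℕ) (m₀ : ℤ), 0 < n₀ ∧ ((n₀:ℝ) * α - m₀) ≠ 0 ∧ |(n₀:ℝ) * α - m₀| < ε := by
  have hd := dense_aux α hα
  have hmin : (0:ℝ) < min ε 1 := lt_min hε one_pos
  have hne : (Set.Ioo (0:ℝ) (min ε 1)).Nonempty := ⟨min ε 1 / 2, by constructor <;> linarith⟩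
  obtain ⟨s, hs1, hs2⟩ := hd.exists_mem_open isOpen_Ioo hne
  rw [SetLike.mem_coe, AddSubgroup.mem_closure_pair] at hs1
  obtain ⟨m, n, hmn⟩ := hs1
  rw [zsmul_eq_mul, zsmul_eq_mul, mul_one] at hmn
  obtain ⟨hs0, hsε⟩ := hs2
  have hn0 : n ≠ 0 := by
    rintro rfl
    push_cast at hmn
    rw [zero_mul, add_zero] at hmn
    subst hmn
    have : (0:ℤ) < m := by exact_mod_cast hs0
    have : (1:ℝ) ≤ m := by exact_mod_cast this
    linarith [lt_of_lt_of_le hsε (min_le_right ε 1)]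
  have hsε' : s < ε := lt_of_lt_of_le hsε (min_le_left ε 1)
  rcases hn0.lt_or_gt with hneg | hpos
  · refine ⟨(-n).toNat, m, ?_, ?_, ?_⟩
    · omega
    · have : ((-n).toNat : ℝ) = -(n:ℝ) := by
        have : ((-n).toNat : ℤ) = -n := Int.toNat_of_nonneg (by omega)
        exact_mod_cast this
      rw [this]
      intro h
      apply hs0.ne'
      nlinarith [hmn]
    · have hcast : ((-n).toNat : ℝ) = -(n:ℝ) := by
        have : ((-n).toNat : ℤ) = -n := Int.toNat_of_nonneg (by omega)
        exact_mod_cast this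
      rw [hcast]
      have : -(n:ℝ) * α - m = -s := by linarith [hmn]
      rw [this, abs_neg, abs_of_pos hs0]
      exact hsε'
  · refine ⟨n.toNat, -m, ?_, ?_, ?_⟩
    · omega
    · have hcast : (n.toNat : ℝ) = (n:ℝ) := by exact_mod_cast Int.toNat_of_nonneg (by omega)
      rw [hcast]
      push_cast
      intro h
      apply hs0.ne'
      nlinarith [hmn]
    · have hcast : (n.toNat : ℝ) = (n:ℝ) := by exact_mod_cast Int.toNat_of_nonneg (by omega)
      rw [hcast]
      push_cast
      have : (n:ℝ) * α - (-m) = s := by linarith [hmn]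
      rw [this, abs_of_pos hs0]
      exact hsε'



-- stepping helper: positive step
lemma step_pos {γ ε : ℝ} (hγ : 0 < γ) (hγε : γ < ε) (x : ℝ) (N : ℕ) :
    ∃ (j : ℕ) (m : ℤ), N ≤ j ∧ |(j:ℝ) * γ - m - x| < ε := by
  set M : ℤ := ⌈(N:ℝ) * γ - x⌉ + 1 with hM
  have hMgt : (N:ℝ) * γ < x + M := by
    have := Int.le_ceil ((N:ℝ) * γ - x)
    push_cast [hM]
    linarith
  set t : ℝ := x + M with ht
  have ht0 : 0 < t := lt_of_le_of_lt (by positivity) hMgt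
  set j : ℕ := ⌈t / γ⌉₊ with hj
  have h1 : t ≤ (j:ℝ) * γ := by
    rw [← div_le_iff₀ hγ]; exact Nat.le_ceil _
  have h2 : (j:ℝ) * γ < t + γ := by
    have := Nat.ceil_lt_add_one (a := t / γ) (by positivity)
    calc (j:ℝ) * γ < (t/γ + 1) * γ := by exact mul_lt_mul_of_pos_right this hγ
    _ = t + γ := by field_simp
  have hjN : N ≤ j := by
    have : (N:ℝ) < j := by
      have : (N:ℝ) * γ < j * γ := lt_of_lt_of_le hMgt h1
      exact lt_of_mul_lt_mul_right this hγ.le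
    exact_mod_cast this.le
  exact ⟨j, M, hjN, by rw [abs_lt]; constructor <;> [linarith; linarith]⟩

-- Lemma A
lemma approx_aux (α : ℝ) (hα : Irrational α) (x : ℝ) {ε : ℝ} (hε : 0 < ε) (N : ℕ) :
    ∃ (n : ℕ) (m : ℤ), N ≤ n ∧ |(n:ℝ) * α - m - x| < ε := by
  obtain ⟨n₀, m₀, hn₀, hne, hlt⟩ := small_aux α hα hε
  set γ : ℝ := (n₀:ℝ) * α - m₀ with hγdef
  rcases hne.lt_or_gt with hneg | hpos
  · obtain ⟨j, m, hjN, hest⟩ := step_pos (γ := -γ) (ε := ε) (by linarith) (by rw [abs_of_neg hneg] at hlt; linarith) (-x) N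
    refine ⟨j * n₀, j * m₀ - m, le_trans hjN (Nat.le_mul_of_pos_right j hn₀), ?_⟩
    have : ((j*n₀:ℕ):ℝ) * α - ((j * m₀ - m : ℤ):ℝ) - x = -((j:ℝ) * (-γ) - m - (-x)) := by
      push_cast [hγdef]; ring
    rw [this, abs_neg]; exact hest
  · obtain ⟨j, m, hjN, hest⟩ := step_pos (γ := γ) (ε := ε) hpos (by rw [abs_of_pos hpos] at hlt; linarith) x N
    refine ⟨j * n₀, j * m₀ + m, le_trans hjN (Nat.le_mul_of_pos_right j hn₀), ?_⟩
    have : ((j*n₀:ℕ):ℝ) * α - ((j * m₀ + m : ℤ):ℝ) - x = (j:ℝ) * γ - m - x := by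
      push_cast [hγdef]; ring
    rw [this]; exact hest



lemma norm_pow_sub_pow (z w : ℂ) (hz : ‖z‖ = 1) (hw : ‖w‖ = 1) :
    ∀ a : ℕ, ‖z ^ a - w ^ a‖ ≤ a * ‖z - w‖ := by
  intro a
  induction a with
  | zero => simp
  | succ a ih =>
    have key : z ^ (a+1) - w ^ (a+1) = z ^ a * (z - w) + (z ^ a - w ^ a) * w := by ring
    calc ‖z ^ (a+1) - w ^ (a+1)‖ ≤ ‖z ^ a * (z - w)‖ + ‖(z ^ a - w ^ a) * w‖ := by
          rw [key]; exact norm_add_le _ _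
      _ = ‖z - w‖ + ‖z ^ a - w ^ a‖ := by rw [norm_mul, norm_mul, norm_pow, hz, hw]; ring
      _ ≤ ‖z - w‖ + a * ‖z - w‖ := by linarith
      _ = (a + 1 : ℕ) * ‖z - w‖ := by push_cast; ring

lemma norm_exp_unit (x : ℝ) : ‖Complex.exp ((x:ℂ) * I)‖ = 1 := by
  exact Complex.norm_exp_ofReal_mul_I x

-- corollary for l: exp close to -1
lemma cor_l (θ : ℝ) (hθ : Irrational θ) {ε : ℝ} (hε : 0 < ε) (N : ℕ) :
    ∃ l : ℕ, N ≤ l ∧ ‖Complex.exp (2 * Real.pi * I * θ * l) + 1‖ < ε := by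
  have hπ := Real.pi_pos
  have hπ4 := Real.pi_le_four
  set ε' : ℝ := min ε 1 / 16 with hε'
  have hmin : (0:ℝ) < min ε 1 := lt_min hε one_pos
  have hε'pos : 0 < ε' := by positivity
  obtain ⟨n, m, hNn, hest⟩ := approx_aux θ hθ (1/2) hε'pos N
  refine ⟨n, hNn, ?_⟩
  set y : ℝ := (n:ℝ) * θ - m - 1/2 with hy
  have key : Complex.exp (2 * Real.pi * I * θ * n) = -Complex.exp (((2 * Real.pi * y : ℝ) : ℂ) * I) := by
    have h1 : (2 * Real.pi * I * θ * n : ℂ) =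
        ((2 * Real.pi * y : ℝ) : ℂ) * I + (m : ℂ) * (2 * Real.pi * I) + Real.pi * I := by
      push_cast [hy]; ring
    rw [h1, Complex.exp_add, Complex.exp_add, Complex.exp_int_mul_two_pi_mul_I,
      Complex.exp_pi_mul_I]
    ring
  have habs : ‖(((2 * Real.pi * y : ℝ) : ℂ) * I)‖ = |2 * Real.pi * y| := by
    rw [norm_mul, Complex.norm_I, Complex.norm_real, mul_one, Real.norm_eq_abs]
  have hy1 : |2 * Real.pi * y| ≤ 1 := by
    rw [abs_mul, abs_of_pos (by positivity : (0:ℝ) < 2 * Real.pi)]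
    nlinarith [abs_nonneg y, hest, min_le_right ε 1]
  have hb := Complex.norm_exp_sub_one_le (x := ((2 * Real.pi * y : ℝ) : ℂ) * I) (by rw [habs]; exact hy1)
  rw [habs] at hb
  have : Complex.exp (2 * Real.pi * I * θ * n) + 1 =
      -(Complex.exp (((2 * Real.pi * y : ℝ) : ℂ) * I) - 1) := by rw [key]; ring
  rw [this, norm_neg]
  calc ‖Complex.exp (((2 * Real.pi * y : ℝ) : ℂ) * I) - 1‖ ≤ 2 * |2 * Real.pi * y| := hb
    _ < ε := by
        rw [abs_mul, abs_of_pos (by positivity : (0:ℝ) < 2 * Real.pi)]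
        nlinarith [abs_nonneg y, hest, min_le_left ε 1]

-- corollary for k: odd, exp close to 1
lemma cor_k (θ : ℝ) (hθ : Irrational θ) {ε : ℝ} (hε : 0 < ε) (N : ℕ) :
    ∃ k : ℕ, N ≤ k ∧ Odd k ∧ ‖Complex.exp (2 * Real.pi * I * θ * k) - 1‖ < ε := by
  have hπ := Real.pi_pos
  have hπ4 := Real.pi_le_four
  set ε' : ℝ := min ε 1 / 16 with hε'
  have hmin : (0:ℝ) < min ε 1 := lt_min hε one_pos
  have hε'pos : 0 < ε' := by positivity
  have h2θ : Irrational (2 * θ) := by exact_mod_cast hθ.natCast_mul (m := 2) (by norm_num)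
  obtain ⟨a, m, hNa, hest⟩ := approx_aux (2*θ) h2θ (-θ) hε'pos N
  refine ⟨2*a+1, by omega, ⟨a, by ring⟩, ?_⟩
  set y : ℝ := ((2*a+1:ℕ):ℝ) * θ - m with hy
  have hyest : |y| < ε' := by
    have : y = (a:ℝ) * (2*θ) - m - (-θ) := by push_cast [hy]; ring
    rw [this]; exact hest
  have key : Complex.exp (2 * Real.pi * I * θ * ((2*a+1:ℕ):ℂ)) =
      Complex.exp (((2 * Real.pi * y : ℝ) : ℂ) * I) := by
    have h1 : (2 * Real.pi * I * θ * ((2*a+1:ℕ):ℂ)) =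
        ((2 * Real.pi * y : ℝ) : ℂ) * I + (m : ℂ) * (2 * Real.pi * I) := by
      push_cast [hy]; ring
    rw [h1, Complex.exp_add, Complex.exp_int_mul_two_pi_mul_I, mul_one]
  have habs : ‖(((2 * Real.pi * y : ℝ) : ℂ) * I)‖ = |2 * Real.pi * y| := by
    rw [norm_mul, Complex.norm_I, Complex.norm_real, mul_one, Real.norm_eq_abs]
  have hy1 : |2 * Real.pi * y| ≤ 1 := by
    rw [abs_mul, abs_of_pos (by positivity : (0:ℝ) < 2 * Real.pi)]
    nlinarith [abs_nonneg y, hyest, min_le_right ε 1]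
  have hb := Complex.norm_exp_sub_one_le (x := ((2 * Real.pi * y : ℝ) : ℂ) * I) (by rw [habs]; exact hy1)
  rw [habs] at hb
  rw [key]
  calc ‖Complex.exp (((2 * Real.pi * y : ℝ) : ℂ) * I) - 1‖ ≤ 2 * |2 * Real.pi * y| := hb
    _ < ε := by
        rw [abs_mul, abs_of_pos (by positivity : (0:ℝ) < 2 * Real.pi)]
        nlinarith [abs_nonneg y, hyest, min_le_left ε 1]

/-- for irrational `θ` there are strictly increasing sequences of positive
integers `(k_n)`, `(l_n)` with every `k_n` odd such that for all `j < n`,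
`|e^{2πiθ k_j l_n} + 1| < 2^{-n}` and `|e^{2πiθ k_n l_j} − 1| < 2^{-n}`. -/
theorem exists_sequences_almost_anticommuting (θ : ℝ) (hθ : Irrational θ) :
    ∃ k l : ℕ → ℕ, StrictMono k ∧ StrictMono l ∧
      (∀ n, 0 < k n ∧ Odd (k n) ∧ 0 < l n) ∧
      ∀ n, ∀ j < n,
        ‖Complex.exp (2 * Real.pi * I * θ * (k j * l n)) + 1‖ < (2 : ℝ) ^ (-(n : ℤ)) ∧
        ‖Complex.exp (2 * Real.pi * I * θ * (k n * l j)) - 1‖ < (2 : ℝ) ^ (-(n : ℤ)) := by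
  classical
  set P : ℕ × ℕ → ℕ → ℕ × ℕ → Prop := fun p n q =>
    p.1 < q.1 ∧ p.2 < q.2 ∧ Odd q.1 ∧
      ‖Complex.exp (2 * Real.pi * I * θ * q.2) + 1‖ < (2:ℝ) ^ (-(n+1:ℤ)) / (p.1 + 1) ∧
      ‖Complex.exp (2 * Real.pi * I * θ * q.1) - 1‖ < (2:ℝ) ^ (-(n+1:ℤ)) / (p.2 + 1) with hP
  have hstep : ∀ p n, ∃ q, P p n q := by
    intro p n
    have hb1 : (0:ℝ) < (2:ℝ) ^ (-(n+1:ℤ)) / (p.1 + 1) := by positivity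
    have hb2 : (0:ℝ) < (2:ℝ) ^ (-(n+1:ℤ)) / (p.2 + 1) := by positivity
    obtain ⟨l', hl'1, hl'2⟩ := cor_l θ hθ hb1 (p.2 + 1)
    obtain ⟨k', hk'1, hk'2, hk'3⟩ := cor_k θ hθ hb2 (p.1 + 1)
    exact ⟨(k', l'), by omega, by omega, hk'2, hl'2, hk'3⟩
  set g : ℕ → ℕ × ℕ := fun n => Nat.rec (1, 1) (fun n p => Classical.choose (hstep p n)) n with hg
  have hgs : ∀ n, P (g n) n (g (n+1)) := fun n => Classical.choose_spec (hstep (g n) n)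
  set k : ℕ → ℕ := fun n => (g n).1 with hk
  set l : ℕ → ℕ := fun n => (g n).2 with hl
  have hkmono : StrictMono k := strictMono_nat_of_lt_succ fun n => (hgs n).1
  have hlmono : StrictMono l := strictMono_nat_of_lt_succ fun n => (hgs n).2.1
  have hk0 : k 0 = 1 := rfl
  have hkpos : ∀ n, 0 < k n := fun n => by
    cases n with
    | zero => simp [hk0]
    | succ n => exact Nat.lt_of_le_of_lt (Nat.zero_le _) (hgs n).1
  have hlpos : ∀ n, 0 < l n := fun n => by
    cases n with
    | zero => exact Nat.one_pos
    | succ n => exact Nat.lt_of_le_of_lt (Nat.zero_le _) (hgs n).2.1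
  have hkodd : ∀ n, Odd (k n) := fun n => by
    cases n with
    | zero => exact ⟨0, rfl⟩
    | succ n => exact (hgs n).2.2.1
  refine ⟨k, l, hkmono, hlmono, fun n => ⟨hkpos n, hkodd n, hlpos n⟩, ?_⟩
  intro n j hj
  cases n with
  | zero => omega
  | succ n =>
    have hjn : j ≤ n := by omega
    obtain ⟨-, -, -, hA, hB⟩ := hgs n
    have hkj : k j ≤ k n := hkmono.monotone hjn
    have hlj : l j ≤ l n := hlmono.monotone hjn
    have hexp : ∀ t : ℕ, ‖Complex.exp (2 * Real.pi * I * θ * t)‖ = 1 := by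
      intro t
      have : (2 * Real.pi * I * θ * (t:ℂ)) = ((2 * Real.pi * θ * t : ℝ) : ℂ) * I := by
        push_cast; ring
      rw [this]; exact norm_exp_unit _
    constructor
    · -- first estimate
      have hrw : Complex.exp (2 * Real.pi * I * θ * ((k j : ℂ) * (l (n+1) : ℂ))) =
          (Complex.exp (2 * Real.pi * I * θ * (l (n+1) : ℂ))) ^ (k j) := by
        rw [← Complex.exp_nat_mul]
        congr 1
        push_cast; ring
      have heq : Complex.exp (2 * Real.pi * I * θ * ((k j : ℂ) * (l (n+1) : ℂ))) + 1 =
          (Complex.exp (2 * Real.pi * I * θ * (l (n+1) : ℂ))) ^ (k j) - (-1:ℂ) ^ (k j) := by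
        rw [hrw, (hkodd j).neg_one_pow]; ring
      rw [heq]
      have hpow := norm_pow_sub_pow (Complex.exp (2 * Real.pi * I * θ * (l (n+1) : ℂ))) (-1)
        (hexp _) (by simp) (k j)
      have hsub : Complex.exp (2 * Real.pi * I * θ * (l (n+1) : ℂ)) - (-1) =
          Complex.exp (2 * Real.pi * I * θ * (l (n+1) : ℂ)) + 1 := by ring
      rw [hsub] at hpow
      have hkjR : (k j : ℝ) ≤ (k n : ℝ) + 1 := by exact_mod_cast Nat.le_succ_of_le hkj
      have hkjpos : (0:ℝ) < (k j : ℝ) := by exact_mod_cast hkpos j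
      calc ‖(Complex.exp (2 * Real.pi * I * θ * (l (n+1) : ℂ))) ^ (k j) - (-1:ℂ) ^ (k j)‖
          ≤ (k j : ℝ) * ‖Complex.exp (2 * Real.pi * I * θ * (l (n+1) : ℂ)) + 1‖ := hpow
        _ < (k j : ℝ) * ((2:ℝ) ^ (-(n+1:ℤ)) / (k n + 1)) := by
            exact mul_lt_mul_of_pos_left hA hkjpos
        _ ≤ ((k n : ℝ) + 1) * ((2:ℝ) ^ (-(n+1:ℤ)) / (k n + 1)) := by
            apply mul_le_mul_of_nonneg_right hkjR (by positivity)
        _ = (2:ℝ) ^ (-(n+1:ℤ)) := by field_simp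
        _ = (2:ℝ) ^ (-((n+1:ℕ):ℤ)) := by norm_num
    · -- second estimate
      have hrw : Complex.exp (2 * Real.pi * I * θ * ((k (n+1) : ℂ) * (l j : ℂ))) =
          (Complex.exp (2 * Real.pi * I * θ * (k (n+1) : ℂ))) ^ (l j) := by
        rw [← Complex.exp_nat_mul]
        congr 1
        push_cast; ring
      have heq : Complex.exp (2 * Real.pi * I * θ * ((k (n+1) : ℂ) * (l j : ℂ))) - 1 =
          (Complex.exp (2 * Real.pi * I * θ * (k (n+1) : ℂ))) ^ (l j) - (1:ℂ) ^ (l j) := by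
        rw [hrw]; simp
      rw [heq]
      have hpow := norm_pow_sub_pow (Complex.exp (2 * Real.pi * I * θ * (k (n+1) : ℂ))) 1
        (hexp _) (by simp) (l j)
      have hljR : (l j : ℝ) ≤ (l n : ℝ) + 1 := by exact_mod_cast Nat.le_succ_of_le hlj
      have hljpos : (0:ℝ) < (l j : ℝ) := by exact_mod_cast hlpos j
      calc ‖(Complex.exp (2 * Real.pi * I * θ * (k (n+1) : ℂ))) ^ (l j) - (1:ℂ) ^ (l j)‖
          ≤ (l j : ℝ) * ‖Complex.exp (2 * Real.pi * I * θ * (k (n+1) : ℂ)) - 1‖ := by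
            simpa using hpow
        _ < (l j : ℝ) * ((2:ℝ) ^ (-(n+1:ℤ)) / (l n + 1)) := by
            exact mul_lt_mul_of_pos_left hB hljpos
        _ ≤ ((l n : ℝ) + 1) * ((2:ℝ) ^ (-(n+1:ℤ)) / (l n + 1)) := by
            apply mul_le_mul_of_nonneg_right hljR (by positivity)
        _ = (2:ℝ) ^ (-(n+1:ℤ)) := by field_simp
        _ = (2:ℝ) ^ (-((n+1:ℕ):ℤ)) := by norm_num
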